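/- Let P be a set, let D_1, …, D_n be reduced seminormal finitely primary monoids (of ranks s_1, …, s_n), and let F = F(P) × D_1 × ⋯ × D_n, where F(P) is the free abelian monoid on P. Then c(F) = max{c(D_1), …, c(D_n)} ≤ 3, and consequently Δ(F) ⊆ {1}. -/

import Mathlib

namespace ArXivSeminormal

attribute [local instance] Classical.propDecidable

noncomputable section
set_option linter.unusedSectionVars false
set_option maxHeartbeats 1000000

/-! ### Generic factorization theory in commutative monoids -/

variable {M : Type*} [CommMonoid M]

/-- The set of factorizations of `a` (in the sense of `Z(a)`): multisets of irreducible
elements of the reduced monoid (modelled by `Associates M`) whose product is the class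
of `a`. -/
def Factorizations (a : M) : Set (Multiset (Associates M)) :=
  {z | (∀ x ∈ z, Irreducible x) ∧ z.prod = Associates.mk a}

/-- The set of lengths `L(a)` of an element `a`. -/
def lengthSet (a : M) : Set ℕ :=
  {k | ∃ z ∈ Factorizations a, Multiset.card z = k}

/-- The set of (successive) distances `Δ(L)` of a set `L ⊆ ℕ`. -/
def DeltaSet (L : Set ℕ) : Set ℕ :=
  {d | ∃ k l, k ∈ L ∧ l ∈ L ∧ k < l ∧ (∀ m, k < m → m < l → m ∉ L) ∧ d = l - k}

/-- The set of distances `Δ(H)` of a monoid `H`. -/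
def DeltaMonoid (M : Type*) [CommMonoid M] : Set ℕ :=
  ⋃ a : M, DeltaSet (lengthSet a)

/-- The distance between two factorizations:
`d(z,z') = max (card (z - gcd z z')) (card (z' - gcd z z'))`. -/
def factorDist (z z' : Multiset (Associates M)) : ℕ :=
  max (Multiset.card (z - z')) (Multiset.card (z' - z))

/-- The catenary degree `c(H)` of a monoid `H`: the smallest `N ∈ ℕ∞` such that any two
factorizations of any element are connected by a chain of factorizations with consecutive
distances at most `N`. -/
def catenaryDegree (M : Type*) [CommMonoid M] : ℕ∞ :=
  sInf {N : ℕ∞ | ∀ (a : M), ∀ z ∈ Factorizations a, ∀ z' ∈ Factorizations a,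
    ∃ c : List (Multiset (Associates M)), c.head? = some z ∧ c.getLast? = some z' ∧
      (∀ w ∈ c, w ∈ Factorizations a) ∧
      List.Chain' (fun u v => (factorDist u v : ℕ∞) ≤ N) c}

/-- A monoid is factorial if every element has a unique factorization. -/
def IsFactorialMonoid (M : Type*) [CommMonoid M] : Prop :=
  ∀ a : M, ∃! z : Multiset (Associates M), z ∈ Factorizations a

/-! ### Free commutative monoids, block monoids, Davenport constant -/

/-- The free abelian (multiplicatively written) monoid on a set `P`. -/
abbrev FreeCM (P : Type*) := Multiplicative (Multiset P)

/-- The sum homomorphism `σ : F(G) → G`. -/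
def sigmaHom (G : Type*) [AddCommMonoid G] : FreeCM G →* Multiplicative G :=
  AddMonoidHom.toMultiplicative
    { toFun := Multiset.sum
      map_zero' := Multiset.sum_zero
      map_add' := Multiset.sum_add }

/-- The monoid of zero-sum sequences over `G`. -/
def BlockMonoid (G : Type*) [AddCommMonoid G] : Submonoid (FreeCM G) :=
  MonoidHom.mker (sigmaHom G)

/-- The Davenport constant of `G`: the supremum of lengths of minimal zero-sum sequences. -/
def Davenport (G : Type*) [AddCommMonoid G] : ℕ :=
  sSup {k | ∃ u : BlockMonoid G, Irreducible u ∧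
    Multiset.card (Multiplicative.toAdd (u : FreeCM G)) = k}

/-! ### Reduced seminormal finitely primary monoids -/

/-- The `Fin s →₀ ℕ` function with all values `1`, i.e. the exponent vector of
`q_1 ⋯ q_s`. -/
def allOnes (s : ℕ) : Fin s →₀ ℕ := Finsupp.equivFunOnFinite.symm fun _ => 1

/-- The reduced seminormal finitely primary monoid of rank `s` with unit group `U` of the
complete integral closure:
`D = {ε q_1^{k_1} ⋯ q_s^{k_s} : ε ∈ U, all k_j ≥ 1} ∪ {1} ⊆ U × [q_1,…,q_s]`. -/
def seminormalD (U : Type*) [CommGroup U] (s : ℕ) :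
    Submonoid (U × Multiplicative (Fin s →₀ ℕ)) where
  carrier := {x | x = 1 ∨ ∀ j, 1 ≤ Multiplicative.toAdd x.2 j}
  one_mem' := Or.inl rfl
  mul_mem' := by
    rintro a b (rfl | ha) (rfl | hb)
    · exact Or.inl (mul_one 1)
    · rw [Set.mem_setOf_eq, one_mul]; exact Or.inr hb
    · rw [Set.mem_setOf_eq, mul_one]; exact Or.inr ha
    · refine Or.inr fun j => ?_
      have h1 := ha j
      have h2 := hb j
      have h3 : Multiplicative.toAdd ((a * b).2) j
          = Multiplicative.toAdd a.2 j + Multiplicative.toAdd b.2 j := rfl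
      omega

/-! ### T-block monoids (Setting (S)) -/

/-- The monoid `T = D_1 × ⋯ × D_n`. -/
abbrev Tm {n : ℕ} (U : Fin n → Type*) [∀ i, CommGroup (U i)] (s : Fin n → ℕ) :=
  ∀ i, ↥(seminormalD (U i) (s i))

/-- The monoid `D̂_1 × ⋯ × D̂_n`. -/
abbrev HatTm {n : ℕ} (U : Fin n → Type*) [∀ i, CommGroup (U i)] (s : Fin n → ℕ) :=
  ∀ i, U i × Multiplicative (Fin (s i) →₀ ℕ)

/-- The monoid `F = F(G) × T`. -/
abbrev Fm (G : Type*) {n : ℕ} (U : Fin n → Type*) [∀ i, CommGroup (U i)] (s : Fin n → ℕ) :=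
  FreeCM G × Tm U s

/-- The homomorphism `F → G`, `S·t ↦ σ(S) + ι(t)`, whose kernel is the `T`-block monoid;
it computes the class `[a] ∈ G ≅ q(F)/q(B)` of `a ∈ F`. -/
def TBlockPhi (G : Type*) [AddCommGroup G] {n : ℕ} (U : Fin n → Type*) [∀ i, CommGroup (U i)]
    (s : Fin n → ℕ) (iota : Tm U s →* Multiplicative G) : Fm G U s →* Multiplicative G :=
  ((sigmaHom G).comp (MonoidHom.fst _ _)) * (iota.comp (MonoidHom.snd _ _))

/-- The `T`-block monoid `B = B(G, T, ι) = {S·t ∈ F(G) × T : σ(S) + ι(t) = 0}`. -/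
def TBlock (G : Type*) [AddCommGroup G] {n : ℕ} (U : Fin n → Type*) [∀ i, CommGroup (U i)]
    (s : Fin n → ℕ) (iota : Tm U s →* Multiplicative G) : Submonoid (Fm G U s) :=
  MonoidHom.mker (TBlockPhi G U s iota)

/-- The inclusion `T = D_1 × ⋯ × D_n → D̂_1 × ⋯ × D̂_n`. -/
def embedT {n : ℕ} (U : Fin n → Type*) [∀ i, CommGroup (U i)] (s : Fin n → ℕ) :
    Tm U s →* HatTm U s :=
  Pi.monoidHom fun i => (seminormalD (U i) (s i)).subtype.comp
    (Pi.evalMonoidHom (fun j => ↥(seminormalD (U j) (s j))) i)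

/-- The norm `‖A‖ = k + 2·Σ_i max L_{D_i}(a_i)` of `A = g_1⋯g_k a_1⋯a_n ∈ F`. -/
def normF (G : Type*) {n : ℕ} (U : Fin n → Type*) [∀ i, CommGroup (U i)] (s : Fin n → ℕ)
    (A : Fm G U s) : ℕ :=
  Multiset.card (Multiplicative.toAdd A.1) + 2 * ∑ i, sSup (lengthSet (A.2 i))

/-- The class `[ε] ∈ G` of a unit `ε ∈ D̂_ν^×`. -/
def classOfUnit {G : Type*} [AddCommGroup G] {n : ℕ} (U : Fin n → Type*)
    [∀ i, CommGroup (U i)] (s : Fin n → ℕ) (iotahat : HatTm U s →* Multiplicative G)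
    (ν : Fin n) (ε : U ν) : Multiplicative G :=
  iotahat (Pi.mulSingle ν (ε, 1))

/-- The class `[q_{ν,j}] ∈ G` of the prime `q_{ν,j}` of `D̂_ν`. -/
def classOfPrime {G : Type*} [AddCommGroup G] {n : ℕ} (U : Fin n → Type*)
    [∀ i, CommGroup (U i)] (s : Fin n → ℕ) (iotahat : HatTm U s →* Multiplicative G)
    (ν : Fin n) (j : Fin (s ν)) : Multiplicative G :=
  iotahat (Pi.mulSingle ν (1, Multiplicative.ofAdd (Finsupp.single j 1)))

/-- The quantity `d_ν ∈ {-1, 0, 1, 2}` from Theorem 3.3 (for `G = {0, e}` of order two). -/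
def dval {G : Type*} [AddCommGroup G] {n : ℕ} (U : Fin n → Type*) [∀ i, CommGroup (U i)]
    (s : Fin n → ℕ) (iotahat : HatTm U s →* Multiplicative G) (e : G) (ν : Fin n) : ℤ :=
  if (∀ ε : U ν, classOfUnit U s iotahat ν ε = 1) ∧ s ν = 2 ∧
      (Finset.univ.filter fun j : Fin (s ν) =>
        classOfPrime U s iotahat ν j = Multiplicative.ofAdd e).card = 2 then 2
  else if (∀ ε : U ν, classOfUnit U s iotahat ν ε = 1) ∧ s ν = 1 then 0
  else if (∀ ε : U ν, classOfUnit U s iotahat ν ε = 1) ∧ 2 ≤ s ν ∧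
      (Finset.univ.filter fun j : Fin (s ν) =>
        classOfPrime U s iotahat ν j = Multiplicative.ofAdd e).card = 0 then -1
  else 1

/-! Part I -/

def IsRed (M : Type*) [CommMonoid M] : Prop := ∀ x y : M, x * y = 1 → x = 1

lemma IsRed.isUnit_iff (h : IsRed M) {x : M} : IsUnit x ↔ x = 1 := by
  constructor
  · rintro ⟨u, rfl⟩; exact h _ _ u.mul_inv
  · rintro rfl; exact isUnit_one

lemma IsRed.mk_injective (h : IsRed M) : Function.Injective (Associates.mk : M → Associates M) := by
  intro a b hab
  obtain ⟨u, rfl⟩ := Associates.mk_eq_mk_iff_associated.1 hab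
  have : (u : M) = 1 := h _ _ u.mul_inv
  rw [this, mul_one]

def mkE (h : IsRed M) : M ≃* Associates M :=
  MulEquiv.ofBijective Associates.mkMonoidHom ⟨h.mk_injective, Associates.mk_surjective⟩

lemma mkE_apply (h : IsRed M) (a : M) : mkE h a = Associates.mk a := rfl

lemma irreducible_mk_iff (h : IsRed M) {a : M} :
    Irreducible (Associates.mk a) ↔ Irreducible a :=
  MulEquiv.irreducible_iff (mkE h)

def Fact' (a : M) : Set (Multiset M) := {W | (∀ x ∈ W, Irreducible x) ∧ W.prod = a}

lemma fact'_one (h : IsRed M) : Fact' (1 : M) = {0} := by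
  ext W
  simp only [Fact', Set.mem_setOf_eq, Set.mem_singleton_iff]
  constructor
  · rintro ⟨hirr, hprod⟩
    by_contra hW
    obtain ⟨x, hx⟩ := Multiset.exists_mem_of_ne_zero hW
    obtain ⟨V, rfl⟩ := Multiset.exists_cons_of_mem hx
    rw [Multiset.prod_cons] at hprod
    exact (hirr x hx).not_isUnit (h.isUnit_iff.2 (h _ _ hprod))
  · rintro rfl; exact ⟨by simp, rfl⟩

lemma fact'_irreducible {u : M} (hu : Irreducible u) : Fact' u = {({u} : Multiset M)} := by
  ext W
  simp only [Fact', Set.mem_setOf_eq, Set.mem_singleton_iff]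
  constructor
  · rintro ⟨hirr, hprod⟩
    rcases W.empty_or_exists_mem with h0 | ⟨x, hx⟩
    · subst h0; simp only [Multiset.prod_zero] at hprod
      exact absurd (hprod ▸ isUnit_one) hu.not_isUnit
    obtain ⟨V, rfl⟩ := Multiset.exists_cons_of_mem hx
    rw [Multiset.prod_cons] at hprod
    rcases V.empty_or_exists_mem with h0 | ⟨y, hy⟩
    · subst h0; simp only [Multiset.prod_zero, mul_one] at hprod; rw [hprod]; rfl
    · rcases hu.isUnit_or_isUnit hprod.symm with hx' | hV
      · exact absurd hx' (hirr x hx).not_isUnit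
      · obtain ⟨V', rfl⟩ := Multiset.exists_cons_of_mem hy
        rw [Multiset.prod_cons] at hV
        exact absurd (isUnit_of_mul_isUnit_left hV)
          (hirr y (Multiset.mem_cons_of_mem (Multiset.mem_cons_self _ _))).not_isUnit
  · rintro rfl; exact ⟨by simpa using hu, by simp⟩

def dist' (W W' : Multiset M) : ℕ :=
  max (Multiset.card (W - W')) (Multiset.card (W' - W))

lemma dist'_comm (W W' : Multiset M) : dist' W W' = dist' W' W := max_comm _ _

def Step' (a : M) (N : ℕ∞) (W W' : Multiset M) : Prop :=
  W ∈ Fact' a ∧ W' ∈ Fact' a ∧ (dist' W W' : ℕ∞) ≤ N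

def Conn' (a : M) (N : ℕ∞) : Multiset M → Multiset M → Prop :=
  Relation.ReflTransGen (Step' a N)

def Good (M : Type*) [CommMonoid M] (N : ℕ∞) : Prop :=
  ∀ a : M, ∀ W ∈ Fact' a, ∀ W' ∈ Fact' a, Conn' a N W W'

lemma Conn'.symm {a : M} {N} {W W'} (h : Conn' a N W W') : Conn' a N W' W := by
  refine @Std.Symm.symm _ _ (@Relation.ReflTransGen.stdSymm _ _ ⟨?_⟩) _ _ h
  rintro u v ⟨h1, h2, h3⟩
  exact ⟨h2, h1, by rwa [dist'_comm]⟩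

/-! Multiset helpers -/

lemma map_sub_inj {α β : Type*} {f : α → β} (hf : Function.Injective f) (s t : Multiset α) :
    (s - t).map f = s.map f - t.map f := by
  classical
  ext x
  by_cases hx : ∃ a, f a = x
  · obtain ⟨a, rfl⟩ := hx
    rw [Multiset.count_map_eq_count' f _ hf, Multiset.count_sub, Multiset.count_sub,
      Multiset.count_map_eq_count' f _ hf, Multiset.count_map_eq_count' f _ hf]
  · have hz : ∀ u : Multiset α, Multiset.count x (u.map f) = 0 := fun u =>
      Multiset.count_eq_zero.2 (by
        intro hmem; obtain ⟨a, _, rfl⟩ := Multiset.mem_map.1 hmem; exact hx ⟨a, rfl⟩)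
    rw [hz, Multiset.count_sub, hz, hz]

lemma dist'_map_inj {α β : Type*} [CommMonoid α] [CommMonoid β] {f : α → β}
    (hf : Function.Injective f) (s t : Multiset α) :
    dist' (s.map f) (t.map f) = dist' s t := by
  rw [dist', dist', ← map_sub_inj hf, ← map_sub_inj hf, Multiset.card_map, Multiset.card_map]

lemma sub_add_sub_disj {α : Type*} (s1 s2 t1 t2 : Multiset α)
    (h : ∀ x : α, (x ∉ s1 ∧ x ∉ s2) ∨ (x ∉ t1 ∧ x ∉ t2)) :
    (s1 + t1) - (s2 + t2) = (s1 - s2) + (t1 - t2) := by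
  classical
  ext x
  rcases h x with ⟨h1, h2⟩ | ⟨h1, h2⟩ <;>
    simp only [Multiset.count_sub, Multiset.count_add, Multiset.count_sub] <;>
    rw [Multiset.count_eq_zero.2 h1, Multiset.count_eq_zero.2 h2] <;> omega

lemma add_sub_add_right_ms {α : Type*} (s1 s2 t : Multiset α) :
    (s1 + t) - (s2 + t) = s1 - s2 := by
  classical
  ext x; simp only [Multiset.count_sub, Multiset.count_add]; omega

/-! RTG / list chains -/

lemma exists_chain_of_rtg {α : Type*} {r : α → α → Prop} {p : α → Prop} {x y : α}
    (hr : Relation.ReflTransGen r x y) (hx : p x) (hstep : ∀ a b, r a b → p b) :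
    ∃ c : List α, c.head? = some x ∧ c.getLast? = some y ∧ (∀ z ∈ c, p z) ∧ c.Chain' r := by
  induction hr with
  | refl => exact ⟨[x], rfl, rfl, by simpa, List.isChain_singleton x⟩
  | @tail b c hab hbc ih =>
      obtain ⟨L, hh, hl, hp, hc⟩ := ih
      refine ⟨L ++ [c], ?_, by simp, ?_, ?_⟩
      · cases L with
        | nil => simp at hh
        | cons z l => simpa using hh
      · intro z hz
        rcases List.mem_append.1 hz with hz | hz
        · exact hp z hz
        · simp only [List.mem_singleton] at hz; subst hz; exact hstep _ _ hbc
      · refine List.IsChain.append hc (List.isChain_singleton _) ?_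
        intro z hz y' hy'
        simp only [List.head?_cons, Option.mem_def, Option.some.injEq] at hy'
        rw [hl] at hz
        simp only [Option.mem_def, Option.some.injEq] at hz
        subst hz; subst hy'; exact hbc

lemma rtg_of_chain {α : Type*} {r : α → α → Prop} :
    ∀ (c : List α) {x y : α}, c.Chain' r → c.head? = some x → c.getLast? = some y →
      Relation.ReflTransGen r x y := by
  intro c
  induction c with
  | nil => intro x y _ h; simp at h
  | cons z l ih =>
      intro x y hc hh hl
      simp only [List.head?_cons, Option.some.injEq] at hh
      subst hh
      cases l with
      | nil => simp only [List.getLast?_singleton, Option.some.injEq] at hl; subst hl; rfl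
      | cons w l' =>
          have hc' := (List.isChain_cons_cons.1 hc)
          have : Relation.ReflTransGen r w y := ih hc'.2 rfl (by simpa using hl)
          exact Relation.ReflTransGen.head hc'.1 this


/-! ### new material: bridges -/

lemma sub_indep {α : Type*} (i1 i2 : DecidableEq α) (s t : Multiset α) :
    @HSub.hSub _ _ _ (@instHSub _ (@Multiset.instSub _ i1)) s t
      = @HSub.hSub _ _ _ (@instHSub _ (@Multiset.instSub _ i2)) s t := by
  rw [Subsingleton.elim i1 i2]

lemma factorDist_eq_dist' (z z' : Multiset (Associates M)) : factorDist z z' = dist' z z' := by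
  unfold factorDist dist'
  congr 1 <;> congr 1 <;> apply sub_indep

lemma mk_prod (W : Multiset M) : (W.map Associates.mk).prod = Associates.mk W.prod := by
  induction W using Multiset.induction with
  | empty => simp
  | cons a s ih => simp only [Multiset.map_cons, Multiset.prod_cons, ih,
      Associates.mk_mul_mk]

lemma chain'_imp_mem {α : Type*} {R S : α → α → Prop} :
    ∀ (c : List α), (∀ x ∈ c, ∀ y ∈ c, R x y → S x y) → c.Chain' R → c.Chain' S := by
  intro c
  induction c with
  | nil => intro _ _; exact List.isChain_nil
  | cons a l ih =>
    intro h hc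
    cases l with
    | nil => simp [List.Chain']
    | cons b l' =>
      simp only [List.Chain', List.isChain_cons_cons] at hc ⊢
      refine ⟨h a (by simp) b (by simp) hc.1, ih ?_ hc.2⟩
      intro x hx y hy
      exact h x (by simp [hx]) y (by simp [hy])

def cSet (M : Type*) [CommMonoid M] : Set ℕ∞ :=
  {N : ℕ∞ | ∀ (a : M), ∀ z ∈ Factorizations a, ∀ z' ∈ Factorizations a,
    ∃ c : List (Multiset (Associates M)), c.head? = some z ∧ c.getLast? = some z' ∧
      (∀ w ∈ c, w ∈ Factorizations a) ∧
      List.Chain' (fun u v => (factorDist u v : ℕ∞) ≤ N) c}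

lemma catenaryDegree_eq_sInf : catenaryDegree M = sInf (cSet M) := rfl

lemma top_mem_cSet : (⊤ : ℕ∞) ∈ cSet M := by
  intro a z hz z' hz'
  exact ⟨[z, z'], rfl, rfl, by rintro w hw; simp only [List.mem_cons, List.mem_singleton,
    List.not_mem_nil, or_false] at hw; rcases hw with rfl | rfl <;> assumption,
    by simp [List.Chain']⟩

lemma catenary_mem_cSet : catenaryDegree M ∈ cSet M := by
  rw [catenaryDegree_eq_sInf]
  exact csInf_mem ⟨⊤, top_mem_cSet⟩

lemma mem_cSet_mono {N N' : ℕ∞} (h : N ∈ cSet M) (hle : N ≤ N') : N' ∈ cSet M := by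
  intro a z hz z' hz'
  obtain ⟨c, h1, h2, h3, h4⟩ := h a z hz z' hz'
  exact ⟨c, h1, h2, h3, List.IsChain.imp (fun ⦃u v⦄ hu => le_trans hu hle) h4⟩

lemma fact_iff_fact' (h : IsRed M) {a : M} {W : Multiset M} :
    W.map Associates.mk ∈ Factorizations a ↔ W ∈ Fact' a := by
  constructor
  · rintro ⟨hirr, hprod⟩
    refine ⟨fun x hx => (irreducible_mk_iff h).1 (hirr _ (Multiset.mem_map_of_mem _ hx)), ?_⟩
    apply h.mk_injective
    rw [← hprod, mk_prod]
  · rintro ⟨hirr, hprod⟩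
    constructor
    · intro x hx
      obtain ⟨w, hw, rfl⟩ := Multiset.mem_map.1 hx
      exact (irreducible_mk_iff h).2 (hirr w hw)
    · rw [mk_prod, hprod]

lemma fact_surj (h : IsRed M) {a : M} {z : Multiset (Associates M)} (hz : z ∈ Factorizations a) :
    ∃ W ∈ Fact' a, W.map Associates.mk = z := by
  refine ⟨z.map (mkE h).symm, ?_, ?_⟩
  · rw [← fact_iff_fact' h]
    convert hz using 1
    rw [Multiset.map_map]
    convert Multiset.map_id z using 1
    apply Multiset.map_congr rfl
    intro x _
    exact (mkE h).apply_symm_apply x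
  · rw [Multiset.map_map]
    convert Multiset.map_id z using 1
    apply Multiset.map_congr rfl
    intro x _
    exact (mkE h).apply_symm_apply x

lemma mem_cSet_of_good (h : IsRed M) {N : ℕ∞} (hg : Good M N) : N ∈ cSet M := by
  intro a z hz z' hz'
  obtain ⟨W, hW, rfl⟩ := fact_surj h hz
  obtain ⟨W', hW', rfl⟩ := fact_surj h hz'
  have hconn : Conn' a N W W' := hg a W hW W' hW'
  obtain ⟨c, hh, hl, hp, hc⟩ := exists_chain_of_rtg (p := fun V => V ∈ Fact' a) hconn hW
    (fun _ _ hs => hs.2.1)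
  refine ⟨c.map (Multiset.map Associates.mk), ?_, ?_, ?_, ?_⟩
  · rw [List.head?_map, hh]; rfl
  · rw [List.getLast?_map, hl]; rfl
  · intro w hw
    obtain ⟨V, hV, rfl⟩ := List.mem_map.1 hw
    exact (fact_iff_fact' h).2 (hp V hV)
  · rw [List.Chain', List.isChain_map]
    refine List.IsChain.imp ?_ hc
    rintro u v ⟨hu, hv, hd⟩
    rw [factorDist_eq_dist', dist'_map_inj h.mk_injective u v]; exact hd

lemma good_of_mem_cSet (h : IsRed M) {N : ℕ∞} (hN : N ∈ cSet M) : Good M N := by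
  intro a W hW W' hW'
  obtain ⟨c, hh, hl, hp, hc⟩ := hN a (W.map Associates.mk) ((fact_iff_fact' h).2 hW)
    (W'.map Associates.mk) ((fact_iff_fact' h).2 hW')
  set g : Multiset (Associates M) → Multiset M := Multiset.map (mkE h).symm with hg
  have hback : ∀ V : Multiset M, g (V.map Associates.mk) = V := by
    intro V
    rw [hg, Multiset.map_map]
    convert Multiset.map_id V using 1
    exact Multiset.map_congr rfl fun x _ => (mkE h).symm_apply_apply x
  have hmemb : ∀ w ∈ c, g w ∈ Fact' a ∧ (g w).map Associates.mk = w := by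
    intro w hw
    obtain ⟨V, hV, rfl⟩ := fact_surj h (hp w hw)
    rw [hback]; exact ⟨hV, rfl⟩
  have hadj : ∀ u ∈ c, ∀ v ∈ c, (factorDist u v : ℕ∞) ≤ N → Step' a N (g u) (g v) := by
    intro u hu v hv hd
    obtain ⟨hu1, hu2⟩ := hmemb u hu
    obtain ⟨hv1, hv2⟩ := hmemb v hv
    refine ⟨hu1, hv1, ?_⟩
    have heq : factorDist u v = dist' (g u) (g v) := by
      conv_lhs => rw [← hu2, ← hv2]
      rw [factorDist_eq_dist']
      exact dist'_map_inj h.mk_injective (g u) (g v)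
    rwa [heq] at hd
  refine rtg_of_chain (r := Step' a N) (c.map g) ?_ ?_ ?_
  · rw [List.Chain', List.isChain_map]
    exact chain'_imp_mem c hadj hc
  · rw [List.head?_map, hh, Option.map_some, hback]
  · rw [List.getLast?_map, hl, Option.map_some, hback]

lemma catenary_le_of_good (h : IsRed M) {N : ℕ∞} (hg : Good M N) : catenaryDegree M ≤ N :=
  sInf_le (mem_cSet_of_good h hg)

lemma good_catenary (h : IsRed M) : Good M (catenaryDegree M) :=
  good_of_mem_cSet h catenary_mem_cSet

lemma lengthSet_eq_fact' (h : IsRed M) (a : M) :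
    lengthSet a = {k | ∃ W ∈ Fact' a, Multiset.card W = k} := by
  ext k
  constructor
  · rintro ⟨z, hz, rfl⟩
    obtain ⟨W, hW, rfl⟩ := fact_surj h hz
    exact ⟨W, hW, (Multiset.card_map _ _).symm ▸ rfl⟩
  · rintro ⟨W, hW, rfl⟩
    exact ⟨W.map Associates.mk, (fact_iff_fact' h).2 hW, Multiset.card_map _ _⟩



/-! ### Intervals -/

def IsInterval (L : Set ℕ) : Prop := ∀ x ∈ L, ∀ y ∈ L, ∀ z : ℕ, x ≤ z → z ≤ y → z ∈ L

lemma isInterval_singleton (k : ℕ) : IsInterval {k} := by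
  intro x hx y hy z h1 h2
  simp only [Set.mem_singleton_iff] at hx hy ⊢
  omega

lemma deltaSet_subset_of_isInterval {L : Set ℕ} (h : IsInterval L) : DeltaSet L ⊆ {1} := by
  rintro d ⟨k, l, hk, hl, hkl, hgap, rfl⟩
  simp only [Set.mem_singleton_iff]
  by_contra hne
  exact hgap (k + 1) (by omega) (by omega) (h k hk l hl (k + 1) (by omega) (by omega))

lemma isInterval_add {L1 L2 : Set ℕ} (h1 : IsInterval L1) (h2 : IsInterval L2) :
    IsInterval {k | ∃ x ∈ L1, ∃ y ∈ L2, x + y = k} := by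
  rintro p ⟨p1, hp1, p2, hp2, rfl⟩ q ⟨q1, hq1, q2, hq2, rfl⟩ z hz1 hz2
  have hm1 : min p1 q1 ∈ L1 := by
    rcases le_total p1 q1 with h | h
    · rwa [min_eq_left h]
    · rwa [min_eq_right h]
  have hM1 : max p1 q1 ∈ L1 := by
    rcases le_total p1 q1 with h | h
    · rwa [max_eq_right h]
    · rwa [max_eq_left h]
  have hm2 : min p2 q2 ∈ L2 := by
    rcases le_total p2 q2 with h | h
    · rwa [min_eq_left h]
    · rwa [min_eq_right h]
  have hM2 : max p2 q2 ∈ L2 := by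
    rcases le_total p2 q2 with h | h
    · rwa [max_eq_right h]
    · rwa [max_eq_left h]
  refine ⟨min (max p1 q1) (max (min p1 q1) (z - max p2 q2)), ?_,
    z - min (max p1 q1) (max (min p1 q1) (z - max p2 q2)), ?_, by omega⟩
  · exact h1 _ hm1 _ hM1 _ (by omega) (by omega)
  · exact h2 _ hm2 _ hM2 _ (by omega) (by omega)

/-! ### Products of two reduced monoids -/

section ProdMonoid

variable {A B : Type*} [CommMonoid A] [CommMonoid B]

lemma isRed_prod (hA : IsRed A) (hB : IsRed B) : IsRed (A × B) := by
  rintro ⟨x1, x2⟩ ⟨y1, y2⟩ hxy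
  rw [Prod.mk_mul_mk, Prod.mk.injEq] at hxy
  · exact Prod.ext_iff.2 ⟨hA _ _ hxy.1, hB _ _ hxy.2⟩

lemma irreducible_prod_iff (hA : IsRed A) (hB : IsRed B) {x : A} {y : B} :
    Irreducible ((x, y) : A × B) ↔ (Irreducible x ∧ y = 1) ∨ (x = 1 ∧ Irreducible y) := by
  have hP := isRed_prod hA hB
  constructor
  · intro h
    rcases h.isUnit_or_isUnit (show (x, y) = (x, 1) * (1, y) by simp) with hu | hu
    · right
      have hx : x = 1 := (Prod.ext_iff.1 (hP.isUnit_iff.1 hu)).1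
      subst hx
      refine ⟨rfl, ?_, ?_⟩
      · intro hy
        exact h.not_isUnit (hP.isUnit_iff.2 (Prod.ext_iff.2 ⟨rfl, hB.isUnit_iff.1 hy⟩))
      · intro a b hab
        rcases h.isUnit_or_isUnit (show ((1:A), y) = (1, a) * (1, b) by simp [hab])
          with hu' | hu'
        · exact Or.inl (hB.isUnit_iff.2 (Prod.ext_iff.1 (hP.isUnit_iff.1 hu')).2)
        · exact Or.inr (hB.isUnit_iff.2 (Prod.ext_iff.1 (hP.isUnit_iff.1 hu')).2)
    · left
      have hy : y = 1 := (Prod.ext_iff.1 (hP.isUnit_iff.1 hu)).2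
      subst hy
      refine ⟨⟨?_, ?_⟩, rfl⟩
      · intro hx
        exact h.not_isUnit (hP.isUnit_iff.2 (Prod.ext_iff.2 ⟨hA.isUnit_iff.1 hx, rfl⟩))
      · intro a b hab
        rcases h.isUnit_or_isUnit (show (x, (1:B)) = (a, 1) * (b, 1) by simp [hab])
          with hu' | hu'
        · exact Or.inl (hA.isUnit_iff.2 (Prod.ext_iff.1 (hP.isUnit_iff.1 hu')).1)
        · exact Or.inr (hA.isUnit_iff.2 (Prod.ext_iff.1 (hP.isUnit_iff.1 hu')).1)
  · rintro (⟨hx, rfl⟩ | ⟨rfl, hy⟩)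
    · refine ⟨?_, ?_⟩
      · intro hu
        exact hx.not_isUnit (hA.isUnit_iff.2 (Prod.ext_iff.1 (hP.isUnit_iff.1 hu)).1)
      · rintro ⟨a1, a2⟩ ⟨b1, b2⟩ hab
        rw [Prod.mk_mul_mk, Prod.mk.injEq] at hab
        have ha2 : a2 = 1 := hB _ _ hab.2.symm
        have hb2 : b2 = 1 := hB _ _ (by rw [mul_comm]; exact hab.2.symm)
        rcases hx.isUnit_or_isUnit hab.1 with hu | hu
        · exact Or.inl (hP.isUnit_iff.2 (Prod.ext_iff.2 ⟨hA.isUnit_iff.1 hu, ha2⟩))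
        · exact Or.inr (hP.isUnit_iff.2 (Prod.ext_iff.2 ⟨hA.isUnit_iff.1 hu, hb2⟩))
    · refine ⟨?_, ?_⟩
      · intro hu
        exact hy.not_isUnit (hB.isUnit_iff.2 (Prod.ext_iff.1 (hP.isUnit_iff.1 hu)).2)
      · rintro ⟨a1, a2⟩ ⟨b1, b2⟩ hab
        rw [Prod.mk_mul_mk, Prod.mk.injEq] at hab
        have ha1 : a1 = 1 := hA _ _ hab.1.symm
        have hb1 : b1 = 1 := hA _ _ (by rw [mul_comm]; exact hab.1.symm)
        rcases hy.isUnit_or_isUnit hab.2 with hu | hu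
        · exact Or.inl (hP.isUnit_iff.2 (Prod.ext_iff.2 ⟨ha1, hB.isUnit_iff.1 hu⟩))
        · exact Or.inr (hP.isUnit_iff.2 (Prod.ext_iff.2 ⟨hb1, hB.isUnit_iff.1 hu⟩))

lemma inl_injective : Function.Injective (⇑(MonoidHom.inl A B)) := by
  intro a1 a2 h
  exact (Prod.ext_iff.1 h).1

lemma inr_injective : Function.Injective (⇑(MonoidHom.inr A B)) := by
  intro a1 a2 h
  exact (Prod.ext_iff.1 h).2

lemma fact'_prod_iff (hA : IsRed A) (hB : IsRed B) {a : A} {b : B} {W : Multiset (A × B)} :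
    W ∈ Fact' ((a, b) : A × B) ↔
      ∃ U ∈ Fact' a, ∃ V ∈ Fact' b,
        W = U.map (⇑(MonoidHom.inl A B)) + V.map (⇑(MonoidHom.inr A B)) := by
  constructor
  · rintro ⟨hirr, hprod⟩
    classical
    have hsplit := Multiset.filter_add_not (fun w : A × B => w.2 = 1) W
    set Wl := W.filter (fun w : A × B => w.2 = 1) with hWl
    set Wr := W.filter (fun w : A × B => ¬ w.2 = 1) with hWr
    have hl : ∀ w ∈ Wl, Irreducible w.1 ∧ w.2 = 1 := by
      intro w hw
      have hw2 := Multiset.of_mem_filter hw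
      have hirrw := hirr w (Multiset.mem_of_mem_filter hw)
      rcases (irreducible_prod_iff hA hB (x := w.1) (y := w.2)).1 (by simpa using hirrw)
        with h | h
      · exact h
      · rw [hw2] at h; exact absurd h.2 (not_irreducible_one)
    have hr : ∀ w ∈ Wr, w.1 = 1 ∧ Irreducible w.2 := by
      intro w hw
      have hw2 := Multiset.of_mem_filter hw
      have hirrw := hirr w (Multiset.mem_of_mem_filter hw)
      rcases (irreducible_prod_iff hA hB (x := w.1) (y := w.2)).1 (by simpa using hirrw)
        with h | h
      · exact absurd h.2 hw2
      · exact h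
    have hWl_eq : Wl = (Wl.map Prod.fst).map (⇑(MonoidHom.inl A B)) := by
      rw [Multiset.map_map]
      refine ((Multiset.map_congr rfl ?_).trans (Multiset.map_id Wl)).symm
      intro w hw
      simp only [Function.comp_apply, id_eq]
      exact Prod.ext_iff.2 ⟨rfl, ((hl w hw).2).symm⟩
    have hWr_eq : Wr = (Wr.map Prod.snd).map (⇑(MonoidHom.inr A B)) := by
      rw [Multiset.map_map]
      refine ((Multiset.map_congr rfl ?_).trans (Multiset.map_id Wr)).symm
      intro w hw
      simp only [Function.comp_apply, id_eq]
      exact Prod.ext_iff.2 ⟨((hr w hw).1).symm, rfl⟩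
    have hprod_split : Wl.prod * Wr.prod = (a, b) := by
      rw [← Multiset.prod_add, hsplit, hprod]
    have hWlprod : Wl.prod = ((Wl.map Prod.fst).prod, 1) := by
      conv_lhs => rw [hWl_eq]
      rw [Multiset.prod_hom _ (MonoidHom.inl A B)]
      rfl
    have hWrprod : Wr.prod = (1, (Wr.map Prod.snd).prod) := by
      conv_lhs => rw [hWr_eq]
      rw [Multiset.prod_hom _ (MonoidHom.inr A B)]
      rfl
    rw [hWlprod, hWrprod, Prod.mk_mul_mk, mul_one, one_mul, Prod.mk.injEq] at hprod_split
    refine ⟨Wl.map Prod.fst, ⟨?_, hprod_split.1⟩, Wr.map Prod.snd, ⟨?_, hprod_split.2⟩, ?_⟩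
    · intro x hx
      obtain ⟨w, hw, rfl⟩ := Multiset.mem_map.1 hx
      exact (hl w hw).1
    · intro x hx
      obtain ⟨w, hw, rfl⟩ := Multiset.mem_map.1 hx
      exact (hr w hw).2
    · rw [← hWl_eq, ← hWr_eq, hsplit]
  · rintro ⟨U, ⟨hUirr, hUprod⟩, V, ⟨hVirr, hVprod⟩, rfl⟩
    constructor
    · intro w hw
      rcases Multiset.mem_add.1 hw with hw | hw
      · obtain ⟨u, hu, rfl⟩ := Multiset.mem_map.1 hw
        exact (irreducible_prod_iff hA hB).2 (Or.inl ⟨hUirr u hu, rfl⟩)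
      · obtain ⟨v, hv, rfl⟩ := Multiset.mem_map.1 hw
        exact (irreducible_prod_iff hA hB).2 (Or.inr ⟨rfl, hVirr v hv⟩)
    · rw [Multiset.prod_add, Multiset.prod_hom _ (MonoidHom.inl A B),
        Multiset.prod_hom _ (MonoidHom.inr A B), hUprod, hVprod]
      exact Prod.ext_iff.2 ⟨by simp, by simp⟩

lemma dist'_add_right {α : Type*} [CommMonoid α] (s1 s2 t : Multiset α) :
    dist' (s1 + t) (s2 + t) = dist' s1 s2 := by
  unfold dist'
  rw [add_sub_add_right_ms, add_sub_add_right_ms]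

lemma dist'_add_left {α : Type*} [CommMonoid α] (s1 s2 t : Multiset α) :
    dist' (t + s1) (t + s2) = dist' s1 s2 := by
  rw [add_comm t s1, add_comm t s2, dist'_add_right]

lemma conn'_mono {a : M} {N N' : ℕ∞} (hle : N ≤ N') {W W' : Multiset M}
    (h : Conn' a N W W') : Conn' a N' W W' := by
  refine Relation.ReflTransGen.mono ?_ _ _ h
  rintro u v ⟨h1, h2, h3⟩
  exact ⟨h1, h2, le_trans h3 hle⟩

lemma conn'_prod_left (hA : IsRed A) (hB : IsRed B) {a : A} {b : B}
    {U U' : Multiset A} {V : Multiset B} (hV : V ∈ Fact' b) {N : ℕ∞}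
    (h : Conn' a N U U') :
    Conn' ((a, b) : A × B) N (U.map (⇑(MonoidHom.inl A B)) + V.map (⇑(MonoidHom.inr A B)))
      (U'.map (⇑(MonoidHom.inl A B)) + V.map (⇑(MonoidHom.inr A B))) := by
  refine Relation.ReflTransGen.lift
    (fun X => X.map (⇑(MonoidHom.inl A B)) + V.map (⇑(MonoidHom.inr A B))) ?_ _ _ h
  rintro X Y ⟨hX, hY, hd⟩
  refine ⟨(fact'_prod_iff hA hB).2 ⟨X, hX, V, hV, rfl⟩,
    (fact'_prod_iff hA hB).2 ⟨Y, hY, V, hV, rfl⟩, ?_⟩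
  rw [dist'_add_right, dist'_map_inj inl_injective]
  exact hd

lemma conn'_prod_right (hA : IsRed A) (hB : IsRed B) {a : A} {b : B}
    {U : Multiset A} {V V' : Multiset B} (hU : U ∈ Fact' a) {N : ℕ∞}
    (h : Conn' b N V V') :
    Conn' ((a, b) : A × B) N (U.map (⇑(MonoidHom.inl A B)) + V.map (⇑(MonoidHom.inr A B)))
      (U.map (⇑(MonoidHom.inl A B)) + V'.map (⇑(MonoidHom.inr A B))) := by
  refine Relation.ReflTransGen.lift
    (fun X => U.map (⇑(MonoidHom.inl A B)) + X.map (⇑(MonoidHom.inr A B))) ?_ _ _ h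
  rintro X Y ⟨hX, hY, hd⟩
  refine ⟨(fact'_prod_iff hA hB).2 ⟨U, hU, X, hX, rfl⟩,
    (fact'_prod_iff hA hB).2 ⟨U, hU, Y, hY, rfl⟩, ?_⟩
  rw [dist'_add_left, dist'_map_inj inr_injective]
  exact hd

lemma good_prod (hA : IsRed A) (hB : IsRed B) {Na Nb : ℕ∞}
    (ga : Good A Na) (gb : Good B Nb) : Good (A × B) (max Na Nb) := by
  rintro ⟨a, b⟩ W hW W' hW'
  obtain ⟨U, hU, V, hV, rfl⟩ := (fact'_prod_iff hA hB).1 hW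
  obtain ⟨U', hU', V', hV', rfl⟩ := (fact'_prod_iff hA hB).1 hW'
  have c1 := conn'_prod_left hA hB (U := U) (U' := U') hV
    (conn'_mono (le_max_left Na Nb) (ga a U hU U' hU'))
  have c2 := conn'_prod_right hA hB (V := V) (V' := V') hU'
    (conn'_mono (le_max_right Na Nb) (gb b V hV V' hV'))
  exact Relation.ReflTransGen.trans c1 c2

lemma good_fst (hA : IsRed A) (hB : IsRed B) {N : ℕ∞} (g : Good (A × B) N) : Good A N := by
  intro a U hU U' hU'
  have h0 : (0 : Multiset B) ∈ Fact' (1 : B) := ⟨by simp, by simp⟩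
  have h1 : (U.map (⇑(MonoidHom.inl A B))) ∈ Fact' ((a, 1) : A × B) :=
    (fact'_prod_iff hA hB).2 ⟨U, hU, 0, h0, by simp⟩
  have h1' : (U'.map (⇑(MonoidHom.inl A B))) ∈ Fact' ((a, 1) : A × B) :=
    (fact'_prod_iff hA hB).2 ⟨U', hU', 0, h0, by simp⟩
  have hc := g (a, 1) _ h1 _ h1'
  have hfst : ∀ (X : Multiset A), (X.map (⇑(MonoidHom.inl A B))).map Prod.fst = X := by
    intro X
    rw [Multiset.map_map]
    exact (Multiset.map_congr rfl (fun x _ => rfl)).trans (Multiset.map_id X)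
  have key := Relation.ReflTransGen.lift (p := Step' a N) (Multiset.map (Prod.fst : A × B → A)) ?_ _ _ hc
  · rw [Function.onFun, hfst, hfst] at key
    exact key
  · rintro W1 W2 ⟨hW1, hW2, hd⟩
    obtain ⟨U1, hU1, V1, hV1, rfl⟩ := (fact'_prod_iff hA hB).1 hW1
    obtain ⟨U2, hU2, V2, hV2, rfl⟩ := (fact'_prod_iff hA hB).1 hW2
    rw [fact'_one hB] at hV1 hV2
    rw [Set.mem_singleton_iff] at hV1 hV2
    subst hV1; subst hV2
    simp only [Multiset.map_zero, add_zero]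
    rw [Function.onFun, hfst, hfst]
    refine ⟨hU1, hU2, ?_⟩
    rw [← dist'_map_inj (inl_injective (A := A) (B := B)) U1 U2]
    simpa using hd
  
lemma good_snd (hA : IsRed A) (hB : IsRed B) {N : ℕ∞} (g : Good (A × B) N) : Good B N := by
  intro b V hV V' hV'
  have h0 : (0 : Multiset A) ∈ Fact' (1 : A) := ⟨by simp, by simp⟩
  have h1 : (V.map (⇑(MonoidHom.inr A B))) ∈ Fact' ((1, b) : A × B) :=
    (fact'_prod_iff hA hB).2 ⟨0, h0, V, hV, by simp⟩
  have h1' : (V'.map (⇑(MonoidHom.inr A B))) ∈ Fact' ((1, b) : A × B) :=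
    (fact'_prod_iff hA hB).2 ⟨0, h0, V', hV', by simp⟩
  have hc := g (1, b) _ h1 _ h1'
  have hsnd : ∀ (X : Multiset B), (X.map (⇑(MonoidHom.inr A B))).map Prod.snd = X := by
    intro X
    rw [Multiset.map_map]
    exact (Multiset.map_congr rfl (fun x _ => rfl)).trans (Multiset.map_id X)
  have key := Relation.ReflTransGen.lift (p := Step' b N) (Multiset.map (Prod.snd : A × B → B)) ?_ _ _ hc
  · rw [Function.onFun, hsnd, hsnd] at key
    exact key
  · rintro W1 W2 ⟨hW1, hW2, hd⟩
    obtain ⟨U1, hU1, V1, hV1, rfl⟩ := (fact'_prod_iff hA hB).1 hW1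
    obtain ⟨U2, hU2, V2, hV2, rfl⟩ := (fact'_prod_iff hA hB).1 hW2
    rw [fact'_one hA] at hU1 hU2
    rw [Set.mem_singleton_iff] at hU1 hU2
    subst hU1; subst hU2
    simp only [Multiset.map_zero, zero_add]
    rw [Function.onFun, hsnd, hsnd]
    refine ⟨hV1, hV2, ?_⟩
    rw [← dist'_map_inj (inr_injective (A := A) (B := B)) V1 V2]
    simpa using hd

lemma catenary_prod (hA : IsRed A) (hB : IsRed B) :
    catenaryDegree (A × B) = max (catenaryDegree A) (catenaryDegree B) := by
  apply le_antisymm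
  · exact catenary_le_of_good (isRed_prod hA hB)
      (good_prod hA hB (good_catenary hA) (good_catenary hB))
  · refine max_le ?_ ?_
    · exact catenary_le_of_good hA
        (good_fst hA hB (good_catenary (isRed_prod hA hB)))
    · exact catenary_le_of_good hB
        (good_snd hA hB (good_catenary (isRed_prod hA hB)))

lemma lengthSet_prod (hA : IsRed A) (hB : IsRed B) (a : A) (b : B) :
    lengthSet ((a, b) : A × B) = {k | ∃ x ∈ lengthSet a, ∃ y ∈ lengthSet b, x + y = k} := by
  ext k
  rw [lengthSet_eq_fact' (isRed_prod hA hB)]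
  constructor
  · rintro ⟨W, hW, rfl⟩
    obtain ⟨U, hU, V, hV, rfl⟩ := (fact'_prod_iff hA hB).1 hW
    refine ⟨Multiset.card U, ?_, Multiset.card V, ?_, by simp⟩
    · rw [lengthSet_eq_fact' hA]; exact ⟨U, hU, rfl⟩
    · rw [lengthSet_eq_fact' hB]; exact ⟨V, hV, rfl⟩
  · rintro ⟨x, hx, y, hy, rfl⟩
    rw [lengthSet_eq_fact' hA] at hx
    rw [lengthSet_eq_fact' hB] at hy
    obtain ⟨U, hU, rfl⟩ := hx
    obtain ⟨V, hV, rfl⟩ := hy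
    exact ⟨U.map (⇑(MonoidHom.inl A B)) + V.map (⇑(MonoidHom.inr A B)),
      (fact'_prod_iff hA hB).2 ⟨U, hU, V, hV, rfl⟩, by simp⟩

end ProdMonoid


/-! ### Transport along multiplicative equivalences -/

section EquivTransport

variable {M' N' : Type*} [CommMonoid M'] [CommMonoid N']

lemma isRed_congr (e : M' ≃* N') (h : IsRed M') : IsRed N' := by
  intro x y hxy
  have h1 := h (e.symm x) (e.symm y) (by rw [← map_mul, hxy, map_one])
  have h2 := congrArg e h1
  simpa using h2

lemma fact'_map_equiv (e : M' ≃* N') {a : M'} {W : Multiset M'} (hW : W ∈ Fact' a) :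
    W.map (⇑e) ∈ Fact' (e a) := by
  obtain ⟨h1, h2⟩ := hW
  refine ⟨?_, ?_⟩
  · intro x hx
    obtain ⟨w, hw, rfl⟩ := Multiset.mem_map.1 hx
    exact (MulEquiv.irreducible_iff e).2 (h1 w hw)
  · rw [Multiset.prod_hom W e, h2]

lemma map_symm_map_equiv (e : M' ≃* N') (X : Multiset M') :
    (X.map (⇑e)).map (⇑e.symm) = X := by
  rw [Multiset.map_map]
  exact (Multiset.map_congr rfl (fun x _ => e.symm_apply_apply x)).trans (Multiset.map_id X)

lemma map_map_symm_equiv (e : M' ≃* N') (X : Multiset N') :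
    (X.map (⇑e.symm)).map (⇑e) = X := by
  rw [Multiset.map_map]
  exact (Multiset.map_congr rfl (fun x _ => e.apply_symm_apply x)).trans (Multiset.map_id X)

lemma good_congr (e : M' ≃* N') {N : ℕ∞} (g : Good M' N) : Good N' N := by
  intro a W hW W'' hW''
  have h1 : (W.map (⇑e.symm)) ∈ Fact' (e.symm a) := fact'_map_equiv e.symm hW
  have h2 : (W''.map (⇑e.symm)) ∈ Fact' (e.symm a) := fact'_map_equiv e.symm hW''
  have hc := g (e.symm a) _ h1 _ h2
  have key := Relation.ReflTransGen.lift (p := Step' a N) (Multiset.map (⇑e)) ?_ _ _ hc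
  · rwa [Function.onFun, map_map_symm_equiv, map_map_symm_equiv] at key
  · rintro X Y ⟨hX, hY, hd⟩
    have hX' := fact'_map_equiv e hX
    have hY' := fact'_map_equiv e hY
    rw [e.apply_symm_apply] at hX' hY'
    exact ⟨hX', hY', by rwa [dist'_map_inj e.injective]⟩

lemma catenary_congr (e : M' ≃* N') (hM : IsRed M') :
    catenaryDegree M' = catenaryDegree N' := by
  have hN : IsRed N' := isRed_congr e hM
  apply le_antisymm
  · exact catenary_le_of_good hM (good_congr e.symm (good_catenary hN))
  · exact catenary_le_of_good hN (good_congr e (good_catenary hM))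

lemma lengthSet_congr (e : M' ≃* N') (hM : IsRed M') (a : M') :
    lengthSet (e a) = lengthSet a := by
  have hN : IsRed N' := isRed_congr e hM
  ext k
  rw [lengthSet_eq_fact' hN, lengthSet_eq_fact' hM]
  constructor
  · rintro ⟨W, hW, rfl⟩
    have := fact'_map_equiv e.symm hW
    rw [e.symm_apply_apply] at this
    exact ⟨W.map (⇑e.symm), this, by rw [Multiset.card_map]⟩
  · rintro ⟨W, hW, rfl⟩
    exact ⟨W.map (⇑e), fact'_map_equiv e hW, by rw [Multiset.card_map]⟩

end EquivTransport

/-! ### The free monoid F(P) -/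

section FreeSection

variable {P : Type*}

lemma isRed_free : IsRed (FreeCM P) := by
  intro x y hxy
  have h0 : Multiplicative.toAdd x + Multiplicative.toAdd y = 0 := congrArg Multiplicative.toAdd hxy
  have hcard := congrArg Multiset.card h0
  rw [Multiset.card_add, Multiset.card_zero] at hcard
  have hx : Multiplicative.toAdd x = 0 := Multiset.card_eq_zero.1 (by omega)
  have := congrArg Multiplicative.ofAdd hx
  simpa using this

lemma free_eq_one_iff {x : FreeCM P} : x = 1 ↔ Multiplicative.toAdd x = (0 : Multiset P) := by
  constructor
  · rintro rfl; rfl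
  · intro h
    have := congrArg Multiplicative.ofAdd h
    simpa using this

lemma irreducible_free_iff {x : FreeCM P} :
    Irreducible x ↔ ∃ p : P, Multiplicative.toAdd x = ({p} : Multiset P) := by
  constructor
  · intro h
    have hx0 : Multiplicative.toAdd x ≠ 0 := by
      intro h0
      exact h.not_isUnit (isRed_free.isUnit_iff.2 (free_eq_one_iff.2 h0))
    have hcard : Multiset.card (Multiplicative.toAdd x) ≠ 0 := by
      simpa [Multiset.card_eq_zero] using hx0
    rcases Nat.lt_or_ge (Multiset.card (Multiplicative.toAdd x)) 2 with hlt | hge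
    · have h1 : Multiset.card (Multiplicative.toAdd x) = 1 := by omega
      exact Multiset.card_eq_one.1 h1
    · exfalso
      obtain ⟨p, hp⟩ := Multiset.exists_mem_of_ne_zero hx0
      obtain ⟨t, ht⟩ := Multiset.exists_cons_of_mem hp
      have hsplit : x = Multiplicative.ofAdd ({p} : Multiset P) * Multiplicative.ofAdd t := by
        apply Multiplicative.toAdd.injective
        rw [ht]
        simp [Multiset.singleton_add]
      have ht0 : t ≠ 0 := by
        intro h0
        rw [ht, h0] at hge
        simp at hge
      rcases h.isUnit_or_isUnit hsplit with hu | hu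
      · have := free_eq_one_iff.1 (isRed_free.isUnit_iff.1 hu)
        simp at this
      · have := free_eq_one_iff.1 (isRed_free.isUnit_iff.1 hu)
        simp only [toAdd_ofAdd] at this
        exact ht0 this
  · rintro ⟨p, hp⟩
    constructor
    · intro hu
      have := free_eq_one_iff.1 (isRed_free.isUnit_iff.1 hu)
      rw [hp] at this
      simp at this
    · intro a b hab
      have hsum : ({p} : Multiset P) = Multiplicative.toAdd a + Multiplicative.toAdd b := by
        rw [← hp, hab]; rfl
      have hcard := congrArg Multiset.card hsum
      rw [Multiset.card_singleton, Multiset.card_add] at hcard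
      rcases Nat.eq_zero_or_pos (Multiset.card (Multiplicative.toAdd a)) with h0 | h0
      · exact Or.inl (isRed_free.isUnit_iff.2 (free_eq_one_iff.2 (Multiset.card_eq_zero.1 h0)))
      · have : Multiset.card (Multiplicative.toAdd b) = 0 := by omega
        exact Or.inr (isRed_free.isUnit_iff.2 (free_eq_one_iff.2 (Multiset.card_eq_zero.1 this)))

lemma free_canon_prod (t : Multiset P) :
    (t.map (fun p => Multiplicative.ofAdd ({p} : Multiset P))).prod = Multiplicative.ofAdd t := by
  induction t using Multiset.induction with
  | empty => rfl
  | cons a u ih =>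
      rw [Multiset.map_cons, Multiset.prod_cons, ih]
      apply Multiplicative.toAdd.injective
      simp [Multiset.singleton_add]

lemma fact'_free_aux : ∀ (W : Multiset (FreeCM P)), (∀ x ∈ W, Irreducible x) →
    W = (Multiplicative.toAdd W.prod).map (fun p => Multiplicative.ofAdd ({p} : Multiset P)) := by
  intro W
  induction W using Multiset.induction with
  | empty => intro _; rfl
  | cons x V ih =>
      intro hirr
      obtain ⟨p, hp⟩ := irreducible_free_iff.1 (hirr x (Multiset.mem_cons_self x V))
      have hV := ih (fun y hy => hirr y (Multiset.mem_cons_of_mem hy))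
      have hta : Multiplicative.toAdd (x ::ₘ V).prod = p ::ₘ Multiplicative.toAdd V.prod := by
        rw [Multiset.prod_cons]
        show Multiplicative.toAdd x + Multiplicative.toAdd V.prod = _
        rw [hp, Multiset.singleton_add]
      rw [hta, Multiset.map_cons, ← hV]
      congr 1

lemma fact'_free (a : FreeCM P) :
    Fact' a = {(Multiplicative.toAdd a).map (fun p => Multiplicative.ofAdd ({p} : Multiset P))} := by
  ext W
  simp only [Set.mem_singleton_iff]
  constructor
  · rintro ⟨hirr, hprod⟩
    rw [← hprod]
    exact fact'_free_aux W hirr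
  · rintro rfl
    refine ⟨?_, ?_⟩
    · intro x hx
      obtain ⟨p, _, rfl⟩ := Multiset.mem_map.1 hx
      exact irreducible_free_iff.2 ⟨p, rfl⟩
    · rw [free_canon_prod]
      simp

lemma good_free : Good (FreeCM P) 0 := by
  intro a W hW W' hW'
  rw [fact'_free] at hW hW'
  rw [Set.mem_singleton_iff] at hW hW'
  rw [hW, ← hW'] at *
  exact Relation.ReflTransGen.refl

lemma lengthSet_free (a : FreeCM P) :
    lengthSet a = {Multiset.card (Multiplicative.toAdd a)} := by
  ext k
  rw [lengthSet_eq_fact' isRed_free, fact'_free]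
  constructor
  · rintro ⟨W, hW, rfl⟩
    rw [Set.mem_singleton_iff] at hW
    rw [hW, Multiset.card_map]
    rfl
  · rintro rfl
    exact ⟨_, rfl, Multiset.card_map _ _⟩

end FreeSection


/-! ### The seminormal finitely primary monoids D -/

lemma conn'_cons {M : Type*} [CommMonoid M] {b α : M} (hα : Irreducible α) {N : ℕ∞}
    {X Y : Multiset M} (h : Conn' b N X Y) : Conn' (α * b) N (α ::ₘ X) (α ::ₘ Y) := by
  refine Relation.ReflTransGen.lift (α ::ₘ ·) ?_ _ _ h
  rintro X1 Y1 ⟨hX1, hY1, hd⟩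
  refine ⟨⟨?_, ?_⟩, ⟨?_, ?_⟩, ?_⟩
  · intro x hx
    rcases Multiset.mem_cons.1 hx with rfl | hx
    · exact hα
    · exact hX1.1 x hx
  · rw [Multiset.prod_cons, hX1.2]
  · intro x hx
    rcases Multiset.mem_cons.1 hx with rfl | hx
    · exact hα
    · exact hY1.1 x hx
  · rw [Multiset.prod_cons, hY1.2]
  · show ((dist' (α ::ₘ X1) (α ::ₘ Y1) : ℕ) : ℕ∞) ≤ N
    rw [← Multiset.singleton_add, ← Multiset.singleton_add, dist'_add_left]
    exact hd

section DSection

variable {U : Type*} [CommGroup U] {s : ℕ}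

/-- exponent vector of an element of `D`. -/
def Ex (d : ↥(seminormalD U s)) : Fin s →₀ ℕ :=
  Multiplicative.toAdd (d : U × Multiplicative (Fin s →₀ ℕ)).2

def F2F (f : Fin s → ℕ) : Fin s →₀ ℕ := Finsupp.equivFunOnFinite.symm f

lemma F2F_apply (f : Fin s → ℕ) (j : Fin s) : F2F f j = f j := rfl

def mkD (ε : U) (v : Fin s →₀ ℕ) (hv : ∀ j, 1 ≤ v j) : ↥(seminormalD U s) :=
  ⟨(ε, Multiplicative.ofAdd v), Or.inr (fun j => hv j)⟩

lemma Ex_mkD (ε : U) (v : Fin s →₀ ℕ) (hv : ∀ j, 1 ≤ v j) : Ex (mkD ε v hv) = v := rfl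

lemma unit_mkD (ε : U) (v : Fin s →₀ ℕ) (hv : ∀ j, 1 ≤ v j) :
    (mkD ε v hv : U × Multiplicative (Fin s →₀ ℕ)).1 = ε := rfl

lemma Ex_mul (d d' : ↥(seminormalD U s)) : Ex (d * d') = Ex d + Ex d' := rfl

lemma Ex_one : Ex (1 : ↥(seminormalD U s)) = 0 := rfl

lemma D_ext {x y : ↥(seminormalD U s)}
    (h1 : (x : U × Multiplicative (Fin s →₀ ℕ)).1 = (y : U × Multiplicative (Fin s →₀ ℕ)).1)
    (h2 : Ex x = Ex y) : x = y := by
  apply Subtype.ext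
  apply Prod.ext_iff.2
  refine ⟨h1, ?_⟩
  have := congrArg Multiplicative.ofAdd h2
  simpa [Ex] using this

lemma eq_one_of_Ex (hs : 1 ≤ s) {d : ↥(seminormalD U s)} (h : Ex d = 0) : d = 1 := by
  rcases d.2 with h1 | h1
  · exact Subtype.ext h1
  · exfalso
    have h2 := h1 ⟨0, hs⟩
    have h3 : Ex d ⟨0, hs⟩ = 0 := by rw [h]; rfl
    have h4 : (1 : ℕ) ≤ Ex d ⟨0, hs⟩ := h2
    omega

lemma Ex_of_eq_one {d : ↥(seminormalD U s)} (h : d = 1) : Ex d = 0 := by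
  subst h; rfl

lemma isRed_D (hs : 1 ≤ s) : IsRed ↥(seminormalD U s) := by
  intro x y hxy
  have hsum : Ex x + Ex y = 0 := by
    rw [← Ex_mul, hxy]; rfl
  apply eq_one_of_Ex hs
  ext j
  have h1 := DFunLike.congr_fun hsum j
  rw [Finsupp.add_apply] at h1
  simp only [Finsupp.coe_zero, Pi.zero_apply] at h1 ⊢
  omega

lemma irr_D_iff (hs : 1 ≤ s) {d : ↥(seminormalD U s)} :
    Irreducible d ↔ (∀ j, 1 ≤ Ex d j) ∧ (∃ j, Ex d j = 1) := by
  constructor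
  · intro h
    have hne : d ≠ 1 := fun h1 => h.not_isUnit (h1 ▸ isUnit_one)
    have hge : ∀ j, 1 ≤ Ex d j := by
      rcases d.2 with h1 | h1
      · exact absurd (Subtype.ext h1) hne
      · exact h1
    refine ⟨hge, ?_⟩
    by_contra hno
    push_neg at hno
    have hge2 : ∀ j, 2 ≤ Ex d j := by
      intro j
      have h1 := hge j
      have h2 := hno j
      omega
    set a : ↥(seminormalD U s) := mkD (d : U × Multiplicative (Fin s →₀ ℕ)).1
      (F2F (fun j => Ex d j - 1))
      (fun j => by rw [F2F_apply]; have := hge2 j; omega) with ha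
    set b : ↥(seminormalD U s) := mkD 1 (F2F (fun _ => 1))
      (fun j => by rw [F2F_apply]) with hb
    have hab : d = a * b := by
      refine (D_ext ?_ ?_).symm
      · show (d : U × Multiplicative (Fin s →₀ ℕ)).1 * 1 = _
        exact mul_one _
      · rw [Ex_mul, ha, hb, Ex_mkD, Ex_mkD]
        ext j
        rw [Finsupp.add_apply, F2F_apply, F2F_apply]
        have := hge2 j
        omega
    rcases h.isUnit_or_isUnit hab with hu | hu
    · have h1 : a = 1 := (isRed_D hs).isUnit_iff.1 hu
      have h2 := DFunLike.congr_fun (Ex_of_eq_one h1) (⟨0, hs⟩ : Fin s)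
      rw [ha, Ex_mkD, F2F_apply] at h2
      simp only [Finsupp.coe_zero, Pi.zero_apply] at h2
      have := hge2 ⟨0, hs⟩
      omega
    · have h1 : b = 1 := (isRed_D hs).isUnit_iff.1 hu
      have h2 := DFunLike.congr_fun (Ex_of_eq_one h1) (⟨0, hs⟩ : Fin s)
      rw [hb, Ex_mkD, F2F_apply] at h2
      simp at h2
  · rintro ⟨hge, j1, hj1⟩
    constructor
    · intro hu
      have h1 : d = 1 := (isRed_D hs).isUnit_iff.1 hu
      have h2 := DFunLike.congr_fun (Ex_of_eq_one h1) j1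
      simp only [Finsupp.coe_zero, Pi.zero_apply] at h2
      omega
    · intro a b hab
      have hsum : Ex a + Ex b = Ex d := by rw [← Ex_mul, ← hab]
      rcases a.2 with h1 | h1
      · exact Or.inl (by rw [(Subtype.ext h1 : a = 1)]; exact isUnit_one)
      · rcases b.2 with h2 | h2
        · exact Or.inr (by rw [(Subtype.ext h2 : b = 1)]; exact isUnit_one)
        · exfalso
          have hj := DFunLike.congr_fun hsum j1
          rw [Finsupp.add_apply] at hj
          have ha1 : 1 ≤ Ex a j1 := h1 j1
          have hb1 : 1 ≤ Ex b j1 := h2 j1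
          omega

lemma two_factor (hs2 : 2 ≤ s) (d : ↥(seminormalD U s)) (hd : ∀ j, 2 ≤ Ex d j) :
    ∃ a b : ↥(seminormalD U s), Irreducible a ∧ Irreducible b ∧ a * b = d := by
  have hs : 1 ≤ s := by omega
  have h10 : (1 : ℕ) < s := hs2
  set j0 : Fin s := ⟨0, by omega⟩ with hj0
  set j1 : Fin s := ⟨1, h10⟩ with hj1
  have hne : j1 ≠ j0 := by
    intro h
    have : (1 : ℕ) = 0 := congrArg Fin.val h
    omega
  refine ⟨mkD (d : U × Multiplicative (Fin s →₀ ℕ)).1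
      (F2F (fun j => if j = j0 then 1 else Ex d j - 1))
      (fun j => by rw [F2F_apply]; split
                   · omega
                   · have := hd j; omega),
    mkD 1 (F2F (fun j => if j = j0 then Ex d j0 - 1 else 1))
      (fun j => by rw [F2F_apply]; split
                   · have := hd j0; omega
                   · omega), ?_, ?_, ?_⟩
  · rw [irr_D_iff hs]
    refine ⟨fun j => by rw [Ex_mkD, F2F_apply]; split
                        · omega
                        · have := hd j; omega,
      j0, ?_⟩
    rw [Ex_mkD, F2F_apply, if_pos rfl]
  · rw [irr_D_iff hs]
    refine ⟨fun j => by rw [Ex_mkD, F2F_apply]; split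
                        · have := hd j0; omega
                        · omega,
      j1, ?_⟩
    rw [Ex_mkD, F2F_apply, if_neg hne]
  · refine D_ext ?_ ?_
    · show (d : U × Multiplicative (Fin s →₀ ℕ)).1 * 1 = _
      exact mul_one _
    · rw [Ex_mul, Ex_mkD, Ex_mkD]
      ext j
      rw [Finsupp.add_apply, F2F_apply, F2F_apply]
      by_cases hj : j = j0
      · subst hj
        rw [if_pos rfl, if_pos rfl]
        have := hd j0
        omega
      · rw [if_neg hj, if_neg hj]
        have := hd j
        omega

lemma D_cancel {x y z : ↥(seminormalD U s)} (h : x * y = x * z) : y = z := by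
  apply D_ext
  · have h1 := congrArg (fun w : ↥(seminormalD U s) =>
      (w : U × Multiplicative (Fin s →₀ ℕ)).1) h
    exact mul_left_cancel (a := (x : U × Multiplicative (Fin s →₀ ℕ)).1) h1
  · have h2 := congrArg Ex h
    rw [Ex_mul, Ex_mul] at h2
    ext j
    have h3 := DFunLike.congr_fun h2 j
    rw [Finsupp.add_apply, Finsupp.add_apply] at h3
    omega

lemma dist'_le_cards {α : Type*} [CommMonoid α] (X Y : Multiset α) :
    dist' X Y ≤ max (Multiset.card X) (Multiset.card Y) := by
  unfold dist'
  exact max_le_max (Multiset.card_le_card tsub_le_self) (Multiset.card_le_card tsub_le_self)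

lemma merge3 (hs2 : 2 ≤ s) {d : ↥(seminormalD U s)} {W : Multiset ↥(seminormalD U s)}
    (hW : W ∈ Fact' d) (h3 : 3 ≤ Multiset.card W) :
    ∃ W' ∈ Fact' d, Multiset.card W' + 1 = Multiset.card W ∧ (dist' W W' : ℕ∞) ≤ 3 := by
  have hs : 1 ≤ s := by omega
  obtain ⟨b1, hb1⟩ := Multiset.card_pos_iff_exists_mem.1
    (show 0 < Multiset.card W by omega)
  obtain ⟨V1, rfl⟩ := Multiset.exists_cons_of_mem hb1
  rw [Multiset.card_cons] at h3
  obtain ⟨b2, hb2⟩ := Multiset.card_pos_iff_exists_mem.1 (show 0 < Multiset.card V1 by omega)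
  obtain ⟨V2, rfl⟩ := Multiset.exists_cons_of_mem hb2
  rw [Multiset.card_cons] at h3
  obtain ⟨b3, hb3⟩ := Multiset.card_pos_iff_exists_mem.1 (show 0 < Multiset.card V2 by omega)
  obtain ⟨V, rfl⟩ := Multiset.exists_cons_of_mem hb3
  have hirr1 := hW.1 b1 (Multiset.mem_cons_self _ _)
  have hirr2 := hW.1 b2 (Multiset.mem_cons_of_mem (Multiset.mem_cons_self _ _))
  have hirr3 := hW.1 b3 (Multiset.mem_cons_of_mem (Multiset.mem_cons_of_mem
    (Multiset.mem_cons_self _ _)))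
  have hge1 := ((irr_D_iff hs).1 hirr1).1
  have hge2 := ((irr_D_iff hs).1 hirr2).1
  have hge3 := ((irr_D_iff hs).1 hirr3).1
  have hc : ∀ j, 2 ≤ Ex (b1 * b2 * b3) j := by
    intro j
    rw [Ex_mul, Ex_mul]
    rw [Finsupp.add_apply, Finsupp.add_apply]
    have := hge1 j
    have := hge2 j
    have := hge3 j
    omega
  obtain ⟨a, b, hairr, hbirr, hab⟩ := two_factor hs2 (b1 * b2 * b3) hc
  refine ⟨a ::ₘ b ::ₘ V, ⟨?_, ?_⟩, ?_, ?_⟩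
  · intro x hx
    rcases Multiset.mem_cons.1 hx with rfl | hx
    · exact hairr
    rcases Multiset.mem_cons.1 hx with rfl | hx
    · exact hbirr
    · exact hW.1 x (Multiset.mem_cons_of_mem (Multiset.mem_cons_of_mem
        (Multiset.mem_cons_of_mem hx)))
  · calc (a ::ₘ b ::ₘ V).prod = (a * b) * V.prod := by
          rw [Multiset.prod_cons, Multiset.prod_cons, mul_assoc]
    _ = (b1 * b2 * b3) * V.prod := by rw [hab]
    _ = (b1 ::ₘ b2 ::ₘ b3 ::ₘ V).prod := by
          rw [Multiset.prod_cons, Multiset.prod_cons, Multiset.prod_cons,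
            mul_assoc, mul_assoc]
    _ = d := hW.2
  · simp only [Multiset.card_cons]
    try omega
  · have he1 : b1 ::ₘ b2 ::ₘ b3 ::ₘ V = (b1 ::ₘ b2 ::ₘ b3 ::ₘ 0) + V := by
      simp [Multiset.cons_add]
    have he2 : a ::ₘ b ::ₘ V = (a ::ₘ b ::ₘ 0) + V := by
      simp [Multiset.cons_add]
    rw [he1, he2, dist'_add_right]
    have hle := dist'_le_cards (b1 ::ₘ b2 ::ₘ b3 ::ₘ (0 : Multiset ↥(seminormalD U s)))
      (a ::ₘ b ::ₘ (0 : Multiset ↥(seminormalD U s)))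
    simp only [Multiset.card_cons, Multiset.card_zero] at hle
    have : dist' (b1 ::ₘ b2 ::ₘ b3 ::ₘ (0 : Multiset ↥(seminormalD U s)))
        (a ::ₘ b ::ₘ (0 : Multiset ↥(seminormalD U s))) ≤ 3 := by omega
    exact_mod_cast this

lemma conn_small (hs2 : 2 ≤ s) (d : ↥(seminormalD U s)) :
    ∀ n (W : Multiset ↥(seminormalD U s)), Multiset.card W = n → W ∈ Fact' d →
      ∃ W2 ∈ Fact' d, Multiset.card W2 ≤ 2 ∧ Conn' d 3 W W2 := by
  intro n
  induction n using Nat.strong_induction_on with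
  | _ n ih =>
    intro W hcard hW
    rcases Nat.lt_or_ge n 3 with h3 | h3
    · exact ⟨W, hW, by omega, Relation.ReflTransGen.refl⟩
    · obtain ⟨W', hW', hcard', hdist⟩ := merge3 hs2 hW (by omega)
      obtain ⟨W2, hW2, hc2, hconn⟩ := ih (n - 1) (by omega) W' (by omega) hW'
      exact ⟨W2, hW2, hc2, Relation.ReflTransGen.head ⟨hW, hW', hdist⟩ hconn⟩

lemma good_D_big (hs2 : 2 ≤ s) : Good ↥(seminormalD U s) 3 := by
  intro d W hW W' hW'
  obtain ⟨W2, hW2, hc2, hconn⟩ := conn_small hs2 d _ W rfl hW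
  obtain ⟨W2', hW2', hc2', hconn'⟩ := conn_small hs2 d _ W' rfl hW'
  have hmid : Step' d 3 W2 W2' := by
    refine ⟨hW2, hW2', ?_⟩
    have hle := dist'_le_cards W2 W2'
    have : dist' W2 W2' ≤ 3 := by omega
    exact_mod_cast this
  exact (hconn.trans (Relation.ReflTransGen.single hmid)).trans hconn'.symm

/-! length sets of D, s ≥ 2 -/

lemma desc_length (hs2 : 2 ≤ s) (d : ↥(seminormalD U s)) {k : ℕ}
    (hk : k ∈ lengthSet d) (h3 : 3 ≤ k) : k - 1 ∈ lengthSet d := by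
  have hs : 1 ≤ s := by omega
  rw [lengthSet_eq_fact' (isRed_D hs)] at hk ⊢
  obtain ⟨W, hW, rfl⟩ := hk
  obtain ⟨W', hW', hcard', _⟩ := merge3 hs2 hW (by omega)
  exact ⟨W', hW', by omega⟩

lemma zero_length (hs : 1 ≤ s) (d : ↥(seminormalD U s)) (h : 0 ∈ lengthSet d) :
    ∀ k ∈ lengthSet d, k = 0 := by
  rw [lengthSet_eq_fact' (isRed_D hs)] at h
  obtain ⟨W, hW, hc⟩ := h
  have hW0 : W = 0 := Multiset.card_eq_zero.1 hc
  subst hW0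
  have hd : d = 1 := by
    have := hW.2
    simpa using this.symm
  subst hd
  intro k hk
  rw [lengthSet_eq_fact' (isRed_D hs), fact'_one (isRed_D hs)] at hk
  obtain ⟨W', hW', rfl⟩ := hk
  rw [Set.mem_singleton_iff] at hW'
  subst hW'
  rfl

/-! the case s = 1 -/

lemma Ex_atom_s1 {d : ↥(seminormalD U 1)} (h : Irreducible d) : ∀ j, Ex d j = 1 := by
  obtain ⟨hge, j1, hj1⟩ := (irr_D_iff (le_refl 1)).1 h
  intro j
  rwa [Subsingleton.elim j j1]

lemma good_D_one : Good ↥(seminormalD U 1) 3 := by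
  have hs : (1 : ℕ) ≤ 1 := le_refl 1
  suffices main : ∀ n (d : ↥(seminormalD U 1)) (W W' : Multiset ↥(seminormalD U 1)),
      Multiset.card W = n → W ∈ Fact' d → W' ∈ Fact' d → Conn' d 3 W W' by
    intro d W hW W' hW'
    exact main _ d W W' rfl hW hW'
  intro n
  induction n using Nat.strong_induction_on with
  | _ n ih =>
    intro d W W' hcard hW hW'
    rcases Nat.eq_zero_or_pos n with rfl | hpos
    · have hW0 : W = 0 := Multiset.card_eq_zero.1 hcard
      subst hW0
      have hd : d = 1 := by
        have := hW.2
        simpa using this.symm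
      subst hd
      rw [fact'_one (isRed_D hs), Set.mem_singleton_iff] at hW'
      rw [hW']
      exact Relation.ReflTransGen.refl
    · have hdne : d ≠ 1 := by
        intro h
        subst h
        rw [fact'_one (isRed_D hs), Set.mem_singleton_iff] at hW
        subst hW
        simp at hcard
        omega
      have hW'ne : W' ≠ 0 := by
        intro h
        subst h
        have h1 : (1 : ↥(seminormalD U 1)) = d := by simpa using hW'.2
        exact hdne h1.symm
      obtain ⟨y, hy⟩ := Multiset.exists_mem_of_ne_zero hW'ne
      have hyirr : Irreducible y := hW'.1 y hy
      obtain ⟨Y, hY⟩ := Multiset.exists_cons_of_mem hy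
      by_cases hyW : y ∈ W
      · obtain ⟨X, hX⟩ := Multiset.exists_cons_of_mem hyW
        have hXfact : X ∈ Fact' X.prod :=
          ⟨fun x hx => hW.1 x (hX ▸ Multiset.mem_cons_of_mem hx), rfl⟩
        have hYfact : Y ∈ Fact' X.prod := by
          refine ⟨fun x hx => hW'.1 x (hY ▸ Multiset.mem_cons_of_mem hx), ?_⟩
          have h1 : y * Y.prod = d := by rw [← hW'.2, hY, Multiset.prod_cons]
          have h2 : y * X.prod = d := by rw [← hW.2, hX, Multiset.prod_cons]
          exact D_cancel (h1.trans h2.symm)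
        have hcX : Multiset.card X = n - 1 := by
          have := congrArg Multiset.card hX
          rw [Multiset.card_cons] at this
          omega
        have hconn := ih (n - 1) (by omega) X.prod X Y hcX hXfact hYfact
        have hlift := conn'_cons hyirr hconn
        have hd' : y * X.prod = d := by rw [← hW.2, hX, Multiset.prod_cons]
        rw [hd'] at hlift
        rw [hX, hY]
        exact hlift
      · rcases Nat.lt_or_ge n 2 with h2 | h2
        · have h1 : Multiset.card W = 1 := by omega
          obtain ⟨x, hx⟩ := Multiset.card_eq_one.1 h1
          subst hx
          have hdx : x = d := by simpa using hW.2
          have hirr : Irreducible d := hdx ▸ hW.1 x (Multiset.mem_singleton_self x)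
          rw [fact'_irreducible hirr, Set.mem_singleton_iff] at hW'
          subst hW'
          rw [Multiset.mem_singleton] at hy
          subst hy
          exact absurd (hdx ▸ Multiset.mem_singleton_self x) hyW
        · obtain ⟨x1, hx1mem⟩ := Multiset.card_pos_iff_exists_mem.1
            (show 0 < Multiset.card W by omega)
          obtain ⟨V1, rfl⟩ := Multiset.exists_cons_of_mem hx1mem
          have hcV1 : 0 < Multiset.card V1 := by
            rw [Multiset.card_cons] at hcard
            omega
          obtain ⟨x2, hx2mem⟩ := Multiset.card_pos_iff_exists_mem.1 hcV1
          obtain ⟨V, rfl⟩ := Multiset.exists_cons_of_mem hx2mem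
          have hirr1 : Irreducible x1 := hW.1 x1 (Multiset.mem_cons_self _ _)
          have hirr2 : Irreducible x2 :=
            hW.1 x2 (Multiset.mem_cons_of_mem (Multiset.mem_cons_self _ _))
          set ηy := (y : U × Multiplicative (Fin 1 →₀ ℕ)).1 with hηy
          set η1 := (x1 : U × Multiplicative (Fin 1 →₀ ℕ)).1 with hη1
          set η2 := (x2 : U × Multiplicative (Fin 1 →₀ ℕ)).1 with hη2
          set z : ↥(seminormalD U 1) := mkD (ηy⁻¹ * (η1 * η2)) (F2F (fun _ => 1))
            (fun j => le_refl 1) with hz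
          have hzirr : Irreducible z := by
            rw [irr_D_iff hs]
            exact ⟨fun j => le_refl 1, ⟨0, by omega⟩, rfl⟩
          have hpair : x1 * x2 = y * z := by
            refine D_ext ?_ ?_
            · show η1 * η2 = ηy * (ηy⁻¹ * (η1 * η2))
              rw [mul_inv_cancel_left]
            · rw [Ex_mul, Ex_mul]
              refine Finsupp.ext fun j => ?_
              rw [Finsupp.add_apply, Finsupp.add_apply]
              rw [Ex_atom_s1 hirr1 j, Ex_atom_s1 hirr2 j, Ex_atom_s1 hyirr j]
              rfl
          have hW1fact : (y ::ₘ z ::ₘ V) ∈ Fact' d := by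
            refine ⟨?_, ?_⟩
            · intro x hx
              rcases Multiset.mem_cons.1 hx with rfl | hx
              · exact hyirr
              rcases Multiset.mem_cons.1 hx with rfl | hx
              · exact hzirr
              · exact hW.1 x (Multiset.mem_cons_of_mem (Multiset.mem_cons_of_mem hx))
            · calc (y ::ₘ z ::ₘ V).prod = (y * z) * V.prod := by
                    rw [Multiset.prod_cons, Multiset.prod_cons, mul_assoc]
              _ = (x1 * x2) * V.prod := by rw [hpair]
              _ = (x1 ::ₘ x2 ::ₘ V).prod := by
                    rw [Multiset.prod_cons, Multiset.prod_cons, mul_assoc]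
              _ = d := hW.2
          have hstep : Step' d 3 (x1 ::ₘ x2 ::ₘ V) (y ::ₘ z ::ₘ V) := by
            refine ⟨hW, hW1fact, ?_⟩
            have he1 : x1 ::ₘ x2 ::ₘ V = (x1 ::ₘ x2 ::ₘ 0) + V := by
              simp [Multiset.cons_add]
            have he2 : y ::ₘ z ::ₘ V = (y ::ₘ z ::ₘ 0) + V := by
              simp [Multiset.cons_add]
            rw [he1, he2, dist'_add_right]
            have hle := dist'_le_cards (x1 ::ₘ x2 ::ₘ (0 : Multiset ↥(seminormalD U 1)))
              (y ::ₘ z ::ₘ (0 : Multiset ↥(seminormalD U 1)))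
            simp only [Multiset.card_cons, Multiset.card_zero] at hle
            have h3 : dist' (x1 ::ₘ x2 ::ₘ (0 : Multiset ↥(seminormalD U 1)))
                (y ::ₘ z ::ₘ (0 : Multiset ↥(seminormalD U 1))) ≤ 3 := by omega
            exact_mod_cast h3
          have hrest : Conn' d 3 (y ::ₘ z ::ₘ V) W' := by
            have hZfact : (z ::ₘ V) ∈ Fact' (z ::ₘ V).prod :=
              ⟨fun x hx => hW1fact.1 x (Multiset.mem_cons_of_mem hx), rfl⟩
            have hYfact : Y ∈ Fact' (z ::ₘ V).prod := by
              refine ⟨fun x hx => hW'.1 x (hY ▸ Multiset.mem_cons_of_mem hx), ?_⟩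
              have hA : y * Y.prod = d := by rw [← hW'.2, hY, Multiset.prod_cons]
              have hB : y * (z ::ₘ V).prod = d := by
                rw [← hW1fact.2]
                simp only [Multiset.prod_cons]
              exact D_cancel (hA.trans hB.symm)
            have hcZ : Multiset.card (z ::ₘ V) = n - 1 := by
              rw [Multiset.card_cons]
              rw [Multiset.card_cons, Multiset.card_cons] at hcard
              omega
            have hconn := ih (n - 1) (by omega) (z ::ₘ V).prod (z ::ₘ V) Y hcZ hZfact hYfact
            have hlift := conn'_cons hyirr hconn
            have hd' : y * (z ::ₘ V).prod = d := by
              rw [← hW1fact.2]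
              simp only [Multiset.prod_cons]
            rw [hd'] at hlift
            rw [hY]
            exact hlift
          exact Relation.ReflTransGen.head hstep hrest

lemma card_fact_s1 : ∀ (W : Multiset ↥(seminormalD U 1)), (∀ x ∈ W, Irreducible x) →
    Multiset.card W = Ex W.prod 0 := by
  intro W
  induction W using Multiset.induction with
  | empty => simp [Ex_one]
  | cons x V ih =>
      intro hirr
      rw [Multiset.card_cons, Multiset.prod_cons, Ex_mul, Finsupp.add_apply,
        Ex_atom_s1 (hirr x (Multiset.mem_cons_self _ _)),
        ih (fun y hy => hirr y (Multiset.mem_cons_of_mem hy))]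
      omega

lemma isInterval_subsingleton {L : Set ℕ} (h : ∀ x ∈ L, ∀ y ∈ L, x = y) : IsInterval L := by
  intro x hx y hy z h1 h2
  have hxy := h x hx y hy
  have hzx : z = x := by omega
  rwa [hzx]

lemma isInterval_lengthSet_D (hs : 1 ≤ s) (d : ↥(seminormalD U s)) :
    IsInterval (lengthSet d) := by
  by_cases hs2 : 2 ≤ s
  · intro x hx y hy z h1 h2
    have main : ∀ m, m ∈ lengthSet d → z ≤ m → z ∈ lengthSet d := by
      intro m
      induction m using Nat.strong_induction_on with
      | _ m ihm =>
        intro hm hzm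
        rcases eq_or_lt_of_le hzm with rfl | hlt
        · exact hm
        · rcases Nat.lt_or_ge m 3 with hm3 | hm3
          · rcases Nat.eq_or_lt_of_le h1 with rfl | hxz'
            · exact hx
            · have hx0 : x = 0 := by omega
              have := zero_length hs d (hx0 ▸ hx) m hm
              omega
          · exact ihm (m - 1) (by omega) (desc_length hs2 d hm (by omega)) (by omega)
    exact main y hy h2
  · have h1 : s = 1 := by omega
    subst h1
    apply isInterval_subsingleton
    intro k1 hk1 k2 hk2
    rw [lengthSet_eq_fact' (isRed_D hs)] at hk1 hk2
    obtain ⟨W1, hW1, rfl⟩ := hk1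
    obtain ⟨W2, hW2, rfl⟩ := hk2
    rw [card_fact_s1 W1 hW1.1, card_fact_s1 W2 hW2.1, hW1.2, hW2.2]

lemma good_D (hs : 1 ≤ s) : Good ↥(seminormalD U s) 3 := by
  by_cases hs2 : 2 ≤ s
  · exact good_D_big hs2
  · have h1 : s = 1 := by omega
    subst h1
    exact good_D_one

end DSection


/-! ### Finite products -/

section PiSection

universe u

lemma isRed_pi {ι : Type*} {G : ι → Type u} [∀ i, CommMonoid (G i)]
    (h : ∀ i, IsRed (G i)) : IsRed (∀ i, G i) := by
  intro x y hxy
  funext i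
  exact h i (x i) (y i) (congrFun hxy i)

lemma fact'_pi_zero {G : Fin 0 → Type u} [∀ i, CommMonoid (G i)] {a : ∀ i, G i}
    {W : Multiset (∀ i, G i)} (hW : W ∈ Fact' a) : W = 0 := by
  rcases W.empty_or_exists_mem with h | ⟨x, hx⟩
  · exact h
  · exfalso
    refine (hW.1 x hx).not_isUnit ?_
    have hx1 : x = 1 := funext fun i => i.elim0
    rw [hx1]
    exact isUnit_one

lemma good_pi_zero {G : Fin 0 → Type u} [∀ i, CommMonoid (G i)] : Good (∀ i, G i) 0 := by
  intro a W hW W' hW'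
  rw [fact'_pi_zero hW, fact'_pi_zero hW']
  exact Relation.ReflTransGen.refl

def piSuccEquiv {m : ℕ} (G : Fin (m + 1) → Type u) [∀ i, CommMonoid (G i)] :
    (∀ i, G i) ≃* (G 0 × ∀ i : Fin m, G i.succ) where
  toFun x := (x 0, fun i => x i.succ)
  invFun p := Fin.cons p.1 p.2
  left_inv x := by
    funext i
    induction i using Fin.cases with
    | zero =>
        show Fin.cons (x 0) (fun i => x i.succ) 0 = x 0
        exact Fin.cons_zero _ _
    | succ i =>
        show Fin.cons (x 0) (fun i => x i.succ) i.succ = x i.succ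
        exact Fin.cons_succ _ _ _
  right_inv p := by
    refine Prod.ext_iff.2 ⟨?_, ?_⟩
    · show Fin.cons p.1 p.2 0 = p.1
      exact Fin.cons_zero _ _
    · funext i
      show Fin.cons p.1 p.2 i.succ = p.2 i
      exact Fin.cons_succ _ _ _
  map_mul' x y := rfl

lemma iSup_fin_succ {m : ℕ} (f : Fin (m + 1) → ℕ∞) :
    (⨆ i, f i) = max (f 0) (⨆ i : Fin m, f i.succ) := by
  apply le_antisymm
  · refine iSup_le fun i => ?_
    induction i using Fin.cases with
    | zero => exact le_max_left _ _
    | succ i => exact le_trans (le_iSup (fun i : Fin m => f i.succ) i) (le_max_right _ _)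
  · exact max_le (le_iSup f 0) (iSup_le fun i => le_iSup f i.succ)

lemma pi_props : ∀ (m : ℕ) (G : Fin m → Type u) (_ : ∀ i, CommMonoid (G i)),
    (∀ i, IsRed (G i)) → (∀ i (a : G i), IsInterval (lengthSet a)) →
    (catenaryDegree (∀ i, G i) = ⨆ i, catenaryDegree (G i)) ∧
      (∀ a : ∀ i, G i, IsInterval (lengthSet a)) := by
  intro m
  induction m with
  | zero =>
      intro G inst hred hint
      constructor
      · have h0 : catenaryDegree (∀ i, G i) = 0 :=
          le_antisymm (catenary_le_of_good (isRed_pi hred) good_pi_zero) (zero_le (a := _))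
        have h1 : (⨆ i : Fin 0, catenaryDegree (G i)) = ⊥ := iSup_of_empty _
        rw [h0, h1]
        rfl
      · intro a
        apply isInterval_subsingleton
        intro k1 hk1 k2 hk2
        rw [lengthSet_eq_fact' (isRed_pi hred)] at hk1 hk2
        obtain ⟨W1, hW1, rfl⟩ := hk1
        obtain ⟨W2, hW2, rfl⟩ := hk2
        rw [fact'_pi_zero hW1, fact'_pi_zero hW2]
  | succ m ihm =>
      intro G inst hred hint
      obtain ⟨ih1, ih2⟩ := ihm (fun i => G i.succ) (fun i => inferInstance)
        (fun i => hred i.succ) (fun i a => hint i.succ a)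
      have hredR : IsRed (∀ i : Fin m, G i.succ) := isRed_pi (fun i => hred i.succ)
      set e := piSuccEquiv G with he
      constructor
      · rw [catenary_congr e (isRed_pi hred), catenary_prod (hred 0) hredR, ih1,
          iSup_fin_succ]
      · intro a
        rw [← lengthSet_congr e (isRed_pi hred) a]
        have hea : e a = (a 0, fun i : Fin m => a i.succ) := rfl
        rw [hea, lengthSet_prod (hred 0) hredR]
        exact isInterval_add (hint 0 (a 0)) (ih2 _)

end PiSection

/-- Step 2 in the proof of Theorem 1.1: for `F = F(P) × D_1 × ⋯ × D_n` with each `D_i`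
reduced seminormal finitely primary, `c(F) = max{c(D_1), …, c(D_n)} ≤ 3` and
consequently `Δ(F) ⊆ {1}`. -/
theorem catenary_degree_of_product_with_free
    {P : Type*} {n : ℕ} (U : Fin n → Type*) [∀ i, CommGroup (U i)]
    (s : Fin n → ℕ) (hs : ∀ i, 1 ≤ s i) :
    catenaryDegree (FreeCM P × ∀ i, ↥(seminormalD (U i) (s i))) =
      (⨆ i, catenaryDegree ↥(seminormalD (U i) (s i))) ∧
    (⨆ i, catenaryDegree ↥(seminormalD (U i) (s i))) ≤ 3 ∧
    DeltaMonoid (FreeCM P × ∀ i, ↥(seminormalD (U i) (s i))) ⊆ {1} := by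
  classical
  have hredD : ∀ i, IsRed ↥(seminormalD (U i) (s i)) := fun i => isRed_D (hs i)
  have hredT : IsRed (∀ i, ↥(seminormalD (U i) (s i))) := isRed_pi hredD
  obtain ⟨hcat, hint⟩ := pi_props n (fun i => ↥(seminormalD (U i) (s i)))
    (fun i => inferInstance) hredD (fun i d => isInterval_lengthSet_D (hs i) d)
  refine ⟨?_, ?_, ?_⟩
  · rw [catenary_prod isRed_free hredT, hcat]
    have h0 : catenaryDegree (FreeCM P) = 0 :=
      le_antisymm (catenary_le_of_good isRed_free good_free) (zero_le (a := _))
    rw [h0, max_eq_right (zero_le (a := _))]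
  · exact iSup_le fun i => catenary_le_of_good (hredD i) (good_D (hs i))
  · intro d hd
    obtain ⟨a, ha⟩ := Set.mem_iUnion.1 hd
    refine deltaSet_subset_of_isInterval ?_ ha
    obtain ⟨x, t⟩ := a
    rw [lengthSet_prod isRed_free hredT]
    refine isInterval_add ?_ (hint t)
    rw [lengthSet_free]
    exact isInterval_singleton _

end
end ArXivSeminormal
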